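/- Let A be a ring, μ ∈ A a nonzerodivisor, and let K be the Koszul complex K_A(δ₁−1,…,δ_d−1) for commuting endomorphisms δᵢ of an A-module N on which the induced action modulo μ is trivial (i.e., (δᵢ−1)(N) ⊆ μN). Then the subcomplex η_μ(K) ⊆ K has j-th term equal to μʲ·Kʲ, i.e., the décalage in degree j consists exactly of the μʲ-multiples. -/

import Mathlib

open Pointwise

/-!
STATEMENT 6. Let `A` be a ring, `μ ∈ A` a nonzerodivisor (on `N`), and let `K` be the
Koszul (cochain) complex `K_N(δ₁−1, …, δ_d−1)` for commuting endomorphisms `δᵢ` of an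
`A`-module `N` whose induced action modulo `μ` is trivial, i.e. `(δᵢ−1)(N) ⊆ μN`.
Then the subcomplex `η_μ(K) ⊆ K` has `j`-th term equal to `μʲ·Kʲ`: the décalage in
degree `j` consists exactly of the `μʲ`-multiples.

We construct the Koszul cochain complex explicitly: its `j`-th term is the module of
functions on `j`-element subsets of `Fin d` with values in `N`, with the usual signed
differential built from the operators `δᵢ − 1`.  The `j`-th term of `η_μ(K)` is
`(μ^j • ⊤) ⊓ d⁻¹(μ^{j+1} • ⊤)`, and the claim is that it equals `μ^j • ⊤`.
-/

/-- Index set for the degree `j` term of the Koszul complex on `d` operators: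
`j`-element subsets of `Fin d`. -/
def KosIdx (d j : ℕ) : Type := {s : Finset (Fin d) // s.card = j}

/-- The degree-`j` differential of the Koszul cochain complex attached to a family of
commuting operators `F i : N →ₗ[A] N`. -/
def kosD {A N : Type*} [CommRing A] [AddCommGroup N] [Module A N] {d : ℕ}
    (F : Fin d → N →ₗ[A] N) (j : ℕ) :
    (KosIdx d j → N) →ₗ[A] (KosIdx d (j + 1) → N) where
  toFun x s :=
    ∑ i ∈ s.1.attach,
      ((-1 : ℤ) ^ ((s.1.filter (fun t => t < i.1)).card)) •
        F i.1 (x ⟨s.1.erase i.1, by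
          rw [Finset.card_erase_of_mem i.2, s.2]; rfl⟩)
  map_add' x y := by
    funext s
    erw [Pi.add_apply]
    rw [← Finset.sum_add_distrib]
    refine Finset.sum_congr rfl fun i _ => ?_
    rw [← smul_add, ← map_add]
    rfl
  map_smul' a x := by
    funext s
    rw [RingHom.id_apply, Pi.smul_apply, Finset.smul_sum]
    refine Finset.sum_congr rfl fun i _ => ?_
    rw [smul_comm a, ← (F i.1).map_smul a]
    rfl

theorem eta_mu_koszul_term_eq_mu_pow_smul
    {A N : Type*} [CommRing A] [AddCommGroup N] [Module A N]
    (μ : A) (hμ : ∀ x : N, μ • x = 0 → x = 0)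
    (d : ℕ) (δ : Fin d → N →ₗ[A] N)
    (hcomm : ∀ i j : Fin d, (δ i).comp (δ j) = (δ j).comp (δ i))
    (hδμ : ∀ (i : Fin d) (x : N), ∃ y : N, δ i x - x = μ • y) :
    ∀ j : ℕ,
      ((μ ^ j • (⊤ : Submodule A (KosIdx d j → N))) ⊓
        Submodule.comap (kosD (fun i => δ i - LinearMap.id) j)
          (μ ^ (j + 1) • (⊤ : Submodule A (KosIdx d (j + 1) → N))))
      = μ ^ j • (⊤ : Submodule A (KosIdx d j → N)) := by
  intro j
  refine le_antisymm inf_le_left (le_inf le_rfl ?_)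
  intro x hx
  obtain ⟨y, -, rfl⟩ := Set.mem_smul_set.mp hx
  simp only [Submodule.mem_comap, map_smul]
  set F : Fin d → N →ₗ[A] N := fun i => δ i - LinearMap.id with hF
  set z : KosIdx d (j+1) → N := fun s =>
    ∑ i ∈ s.1.attach,
      ((-1 : ℤ) ^ ((s.1.filter (fun t => t < i.1)).card)) •
        Classical.choose (hδμ i.1 (y ⟨s.1.erase i.1, by
          rw [Finset.card_erase_of_mem i.2, s.2]; rfl⟩)) with hz
  have key : kosD F j y = μ • z := by
    funext s
    show (∑ i ∈ s.1.attach, _) = μ • z s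
    rw [hz, Finset.smul_sum]
    refine Finset.sum_congr rfl fun i _ => ?_
    rw [smul_comm μ]
    congr 1
    show F i.1 _ = μ • _
    simp only [hF, LinearMap.sub_apply, LinearMap.id_apply]
    exact Classical.choose_spec (hδμ i.1 _)
  rw [key, smul_smul, ← pow_succ]
  exact Submodule.smul_mem_pointwise_smul _ _ _ Submodule.mem_top
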